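/- Let n ≥ 2 and k an integer. There exists a (2n)×2 integer matrix P with Pᵀ·(H ⊕ ⋯ ⊕ H)·P = k·I₂, where the left matrix is the block-diagonal sum of n copies of the hyperbolic matrix H, if and only if k is even. (This is the algebraic content of: there is a degree k map f: (S²×S²)^{♯n} → ℂP²♯ℂP², n ≥ 2, if and only if k is an even number.) -/
import Mathlib

open Matrix

/-- The pairing involution on `Fin (2 * n)`: swaps `2t ↔ 2t+1`. -/
def sigPair {n : ℕ} (j : Fin (2 * n)) : Fin (2 * n) :=
  ⟨if (j : ℕ) % 2 = 0 then (j : ℕ) + 1 else (j : ℕ) - 1, by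
    rcases j with ⟨v, hv⟩
    dsimp
    split <;> omega⟩

lemma sigPair_val {n : ℕ} (j : Fin (2 * n)) :
    (sigPair j : ℕ) = if (j : ℕ) % 2 = 0 then (j : ℕ) + 1 else (j : ℕ) - 1 := rfl

lemma sigPair_sigPair {n : ℕ} (j : Fin (2 * n)) : sigPair (sigPair j) = j := by
  apply Fin.ext
  rcases j with ⟨v, hv⟩
  simp only [sigPair_val]
  split_ifs <;> omega

lemma sigPair_ne {n : ℕ} (j : Fin (2 * n)) : sigPair j ≠ j := by
  intro h
  have := congrArg Fin.val h
  rw [sigPair_val] at this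
  rcases j with ⟨v, hv⟩
  dsimp at this
  split_ifs at this <;> omega

lemma cond_iff {n : ℕ} (i j : Fin (2 * n)) :
    ((i : ℕ) / 2 = (j : ℕ) / 2 ∧ (i : ℕ) ≠ (j : ℕ)) ↔ i = sigPair j := by
  rw [Fin.ext_iff, sigPair_val]
  rcases i with ⟨a, ha⟩
  rcases j with ⟨b, hb⟩
  dsimp
  split_ifs <;> omega

lemma key {n : ℕ} (P : Matrix (Fin (2 * n)) (Fin 2) ℤ) (a b : Fin 2) :
    (Pᵀ * (Matrix.of fun i j : Fin (2 * n) =>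
        if (i : ℕ) / 2 = (j : ℕ) / 2 ∧ (i : ℕ) ≠ (j : ℕ) then (1 : ℤ) else 0) * P) a b
      = ∑ j, P (sigPair j) a * P j b := by
  rw [Matrix.mul_apply]
  refine Finset.sum_congr rfl fun j _ => ?_
  rw [Matrix.mul_apply]
  congr 1
  have : ∀ i : Fin (2 * n), Pᵀ a i *
      (Matrix.of fun i j : Fin (2 * n) =>
        if (i : ℕ) / 2 = (j : ℕ) / 2 ∧ (i : ℕ) ≠ (j : ℕ) then (1 : ℤ) else 0) i j
      = if i = sigPair j then P i a else 0 := by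
    intro i
    rw [Matrix.of_apply, Matrix.transpose_apply, if_congr (cond_iff i j) rfl rfl]
    by_cases h : i = sigPair j
    · rw [if_pos h, if_pos h, mul_one]
    · rw [if_neg h, if_neg h, mul_zero]
  simp only [this]
  simp

/-- The explicit degree-`2m` matrix. -/
def PP {n : ℕ} (m : ℤ) : Matrix (Fin (2 * n)) (Fin 2) ℤ :=
  Matrix.of fun i j => if (i : ℕ) = 0 ∧ (j : ℕ) = 0 then 1 else
    if (i : ℕ) = 1 ∧ (j : ℕ) = 0 then m else
    if (i : ℕ) = 2 ∧ (j : ℕ) = 1 then 1 else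
    if (i : ℕ) = 3 ∧ (j : ℕ) = 1 then m else 0

lemma foursum {N : ℕ} (f : Fin N → ℤ) (i0 i1 i2 i3 : Fin N)
    (h01 : i0 ≠ i1) (h02 : i0 ≠ i2) (h03 : i0 ≠ i3)
    (h12 : i1 ≠ i2) (h13 : i1 ≠ i3) (h23 : i2 ≠ i3)
    (h : ∀ i, i ≠ i0 → i ≠ i1 → i ≠ i2 → i ≠ i3 → f i = 0) :
    ∑ i, f i = f i0 + f i1 + f i2 + f i3 := by
  have hsub : ({i0, i1, i2, i3} : Finset (Fin N)) ⊆ Finset.univ := Finset.subset_univ _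
  rw [← Finset.sum_subset hsub (fun x _ hx => ?_)]
  · rw [Finset.sum_insert, Finset.sum_insert, Finset.sum_insert, Finset.sum_singleton]
    · ring
    · simp [h23]
    · simp [h12, h13]
    · simp [h01, h02, h03]
  · simp only [Finset.mem_insert, Finset.mem_singleton] at hx
    push_neg at hx
    exact h x hx.1 hx.2.1 hx.2.2.1 hx.2.2.2

theorem degree_s2s2_n_to_cp2_two {n : ℕ} (hn : 2 ≤ n) (k : ℤ) :
    (∃ P : Matrix (Fin (2 * n)) (Fin 2) ℤ,
        Pᵀ * (Matrix.of fun i j : Fin (2 * n) =>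
            if (i : ℕ) / 2 = (j : ℕ) / 2 ∧ (i : ℕ) ≠ (j : ℕ) then (1 : ℤ) else 0) * P
          = k • (1 : Matrix (Fin 2) (Fin 2) ℤ)) ↔
      Even k := by
  have hN : 4 ≤ 2 * n := by omega
  constructor
  · rintro ⟨P, hP⟩
    have h00 := congrFun (congrFun hP 0) 0
    rw [key] at h00
    rw [Matrix.smul_apply, Matrix.one_apply_eq, smul_eq_mul, mul_one] at h00
    obtain ⟨c, hc⟩ : (2 : ℤ) ∣ k := by
      have h2 : ((k : ℤ) : ZMod 2) = 0 := by
        rw [← h00]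
        push_cast
        apply Finset.sum_involution (fun j _ => sigPair j)
        · intro j _
          rw [sigPair_sigPair]
          have h2 : ∀ u v : ZMod 2, u * v + v * u = 0 := by decide
          exact h2 _ _
        · intro j _ _
          exact sigPair_ne j
        · intro j _
          exact Finset.mem_univ _
        · intro j _
          exact sigPair_sigPair j
      exact_mod_cast (ZMod.intCast_zmod_eq_zero_iff_dvd k 2).mp h2
    exact ⟨c, by omega⟩
  · rintro ⟨m, hm⟩
    refine ⟨PP m, ?_⟩
    obtain ⟨i0, h0⟩ : ∃ i : Fin (2 * n), (i : ℕ) = 0 := ⟨⟨0, by omega⟩, rfl⟩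
    obtain ⟨i1, h1⟩ : ∃ i : Fin (2 * n), (i : ℕ) = 1 := ⟨⟨1, by omega⟩, rfl⟩
    obtain ⟨i2, h2⟩ : ∃ i : Fin (2 * n), (i : ℕ) = 2 := ⟨⟨2, by omega⟩, rfl⟩
    obtain ⟨i3, h3⟩ : ∃ i : Fin (2 * n), (i : ℕ) = 3 := ⟨⟨3, by omega⟩, rfl⟩
    have s0 : sigPair i0 = i1 := by apply Fin.ext; rw [sigPair_val, h0, h1]; norm_num
    have s1 : sigPair i1 = i0 := by apply Fin.ext; rw [sigPair_val, h1, h0]; norm_num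
    have s2 : sigPair i2 = i3 := by apply Fin.ext; rw [sigPair_val, h2, h3]; norm_num
    have s3 : sigPair i3 = i2 := by apply Fin.ext; rw [sigPair_val, h3, h2]; norm_num
    ext a b
    rw [key, foursum _ i0 i1 i2 i3
      (by intro he; rw [he] at h0; omega) (by intro he; rw [he] at h0; omega)
      (by intro he; rw [he] at h0; omega) (by intro he; rw [he] at h1; omega)
      (by intro he; rw [he] at h1; omega) (by intro he; rw [he] at h2; omega)
      (fun i n0 n1 n2 n3 => ?_),
      s0, s1, s2, s3]
    · simp only [PP, Matrix.of_apply, h0, h1, h2, h3]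
      fin_cases a <;> fin_cases b <;>
        norm_num [Matrix.smul_apply, Matrix.one_apply] <;> omega
    · have n0' : (i : ℕ) ≠ 0 := fun hv => n0 (Fin.ext (by omega))
      have n1' : (i : ℕ) ≠ 1 := fun hv => n1 (Fin.ext (by omega))
      have n2' : (i : ℕ) ≠ 2 := fun hv => n2 (Fin.ext (by omega))
      have n3' : (i : ℕ) ≠ 3 := fun hv => n3 (Fin.ext (by omega))
      have c1 : ¬ ((i : ℕ) = 0 ∧ (b : ℕ) = 0) := by omega
      have c2 : ¬ ((i : ℕ) = 1 ∧ (b : ℕ) = 0) := by omega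
      have c3 : ¬ ((i : ℕ) = 2 ∧ (b : ℕ) = 1) := by omega
      have c4 : ¬ ((i : ℕ) = 3 ∧ (b : ℕ) = 1) := by omega
      rw [show PP m i b = 0 by
        simp only [PP, Matrix.of_apply, if_neg c1, if_neg c2, if_neg c3, if_neg c4], mul_zero]
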